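/- arXiv:2604.13786 — 2 statements merged into one kernel-verified Lean document; each statement's English description precedes it below -/
import Mathlib

section
/- Cipher-unbiasedness: let Φ be a random variable taking values in the permutations of {0,…,M−1} (defined on some probability space), and fix a symbol s ∈ {0,…,M−1}. If the induced bin index Φ(s) is uniformly distributed on {0,…,M−1}, then for every token y, E[p_wm(y | Φ(s))] = p₀(y). -/
open MeasureTheory

/-- Cumulative sum of `p` over tokens strictly preceding `y`. -/
noncomputable def cdfBefore {V : Type*} [Fintype V] [LinearOrder V] (p : V → ℝ) (y : V) : ℝ :=
  ∑ z ∈ Finset.univ.filter (fun z => z < y), p z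

/-- The CDF interval `I(y) = [F(y), F(y) + p(y))` of token `y`. -/
noncomputable def tokenInterval {V : Type*} [Fintype V] [LinearOrder V] (p : V → ℝ) (y : V) :
    Set ℝ :=
  Set.Ico (cdfBefore p y) (cdfBefore p y + p y)

/-- The `r`-th equal-width quantile bin `B_r = [r/M, (r+1)/M)`. -/
noncomputable def quantileBin (M : ℕ) (r : ℕ) : Set ℝ :=
  Set.Ico ((r : ℝ) / M) (((r : ℝ) + 1) / M)

/-- Overlap mass `μ(y, r) = λ(I(y) ∩ B_r)`. -/
noncomputable def overlapMass {V : Type*} [Fintype V] [LinearOrder V] (p : V → ℝ) (M : ℕ)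
    (y : V) (r : ℕ) : ℝ :=
  (volume (tokenInterval p y ∩ quantileBin M r)).toReal

open scoped ENNReal

lemma bin_cover {M : ℕ} (hM : 1 ≤ M) : Set.Ico (0:ℝ) 1 ⊆ ⋃ r : Fin M, quantileBin M r := by
  intro x hx
  have hMpos : (0:ℝ) < M := by exact_mod_cast hM
  have hx0 : 0 ≤ x * M := mul_nonneg hx.1 hMpos.le
  have hr : ⌊x * M⌋₊ < M := by
    rw [Nat.floor_lt hx0]
    calc x * M < 1 * M := by nlinarith [hx.2]
    _ = M := one_mul _
  refine Set.mem_iUnion.2 ⟨⟨⌊x * M⌋₊, hr⟩, ?_, ?_⟩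
  · simp only
    rw [div_le_iff₀ hMpos]
    exact Nat.floor_le hx0
  · simp only
    rw [lt_div_iff₀ hMpos]
    exact Nat.lt_floor_add_one _

lemma sum_overlap {V : Type*} [Fintype V] [LinearOrder V]
    (p₀ : V → ℝ) (hnn : ∀ y, 0 ≤ p₀ y) (hsum : ∑ y, p₀ y = 1)
    (M : ℕ) (hM : 1 ≤ M) (y : V) :
    ∑ r : Fin M, overlapMass p₀ M y ((r : Fin M) : ℕ) = p₀ y := by
  have hI : tokenInterval p₀ y ⊆ Set.Ico (0:ℝ) 1 := by
    have h0 : 0 ≤ cdfBefore p₀ y := Finset.sum_nonneg (fun z _ => hnn z)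
    have h1 : cdfBefore p₀ y + p₀ y ≤ 1 := by
      have hy : y ∉ Finset.univ.filter (fun z => z < y) := by simp
      have := Finset.sum_insert (s := Finset.univ.filter (fun z => z < y)) (f := p₀) hy
      rw [← hsum]
      calc cdfBefore p₀ y + p₀ y = ∑ z ∈ insert y (Finset.univ.filter (fun z => z < y)), p₀ z := by
            rw [this, add_comm]; rfl
        _ ≤ ∑ z, p₀ z :=
            Finset.sum_le_sum_of_subset_of_nonneg (Finset.subset_univ _)
              (fun z _ _ => hnn z)
    intro x hx
    exact ⟨le_trans h0 hx.1, lt_of_lt_of_le hx.2 h1⟩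
  have hMpos : (0:ℝ) < M := by exact_mod_cast hM
  have hmeas : ∀ r : Fin M, MeasurableSet (tokenInterval p₀ y ∩ quantileBin M r) :=
    fun r => measurableSet_Ico.inter measurableSet_Ico
  have hdisj : Pairwise (Function.onFun Disjoint
      (fun r : Fin M => tokenInterval p₀ y ∩ quantileBin M r)) := by
    intro r r' hne
    refine Disjoint.inter_left' _ (Disjoint.inter_right' _ ?_)
    rw [quantileBin, quantileBin, Set.Ico_disjoint_Ico]
    have key : ∀ a b : ℕ, a < b →
        min (((a:ℝ)+1)/M) (((b:ℝ)+1)/M) ≤ max ((a:ℝ)/M) ((b:ℝ)/M) := by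
      intro a b hab
      refine le_trans (min_le_left _ _) (le_trans ?_ (le_max_right _ _))
      have : (a:ℝ) + 1 ≤ (b:ℝ) := by exact_mod_cast hab
      gcongr
    have hne' : (r:ℕ) ≠ (r':ℕ) := fun h => hne (Fin.ext h)
    rcases hne'.lt_or_gt with h | h
    · exact key _ _ h
    · rw [min_comm, max_comm]; exact key _ _ h
  -- sum of measures equals measure of token interval
  have hsum_meas : ∑ r : Fin M, volume (tokenInterval p₀ y ∩ quantileBin M r)
      = volume (tokenInterval p₀ y) := by
    rw [← tsum_fintype (L := SummationFilter.unconditional _), ← measure_iUnion hdisj hmeas, ← Set.inter_iUnion]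
    congr 1
    exact Set.inter_eq_left.2 (fun x hx => bin_cover hM (hI hx))
  have hfin : ∀ r : Fin M, volume (tokenInterval p₀ y ∩ quantileBin M r) ≠ ∞ := by
    intro r
    refine ne_of_lt (lt_of_le_of_lt (measure_mono (Set.inter_subset_right)) ?_)
    rw [quantileBin, Real.volume_Ico]
    exact ENNReal.ofReal_lt_top
  have := ENNReal.toReal_sum (s := Finset.univ) (f := fun r : Fin M =>
    volume (tokenInterval p₀ y ∩ quantileBin M r)) (fun r _ => hfin r)
  unfold overlapMass
  rw [← this, hsum_meas, tokenInterval, Real.volume_Ico, ENNReal.toReal_ofReal]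
  · ring
  · linarith [hnn y]

/-- cipher-unbiasedness: let `Φ` be a random permutation of `{0, …, M−1}`
defined on a probability space, and fix a symbol `s`. If the induced bin index `Φ(s)` is
uniformly distributed on `{0, …, M−1}`, then for every token `y`,
`E[p_wm(y | Φ(s))] = p₀(y)`. -/
theorem cipher_unbiasedness {V : Type*} [Fintype V] [LinearOrder V]
    (p₀ : V → ℝ) (hnn : ∀ y, 0 ≤ p₀ y) (hsum : ∑ y, p₀ y = 1)
    (M : ℕ) (hM : 1 ≤ M)
    {Ω : Type*} [MeasurableSpace Ω] (P : Measure Ω) [IsProbabilityMeasure P]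
    (Φ : Ω → Equiv.Perm (Fin M)) (s : Fin M)
    (hunif : ∀ r : Fin M, P {ω | Φ ω s = r} = (M : ℝ≥0∞)⁻¹) :
    ∀ y : V, ∫ ω, (M : ℝ) * overlapMass p₀ M y ((Φ ω s : Fin M) : ℕ) ∂P = p₀ y := by
  intro y
  have hMne : (M : ℝ≥0∞) ≠ 0 := by exact_mod_cast Nat.one_le_iff_ne_zero.mp hM
  set f : Fin M → ℝ := fun r => (M : ℝ) * overlapMass p₀ M y (r : ℕ) with hf
  set A : Fin M → Set Ω := fun r => {ω | Φ ω s = r} with hA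
  set T : Fin M → Set Ω := fun r => toMeasurable P (A r) with hT
  have hTmeas : ∀ r, MeasurableSet (T r) := fun r => measurableSet_toMeasurable _ _
  have hAT : ∀ r, A r ⊆ T r := fun r => subset_toMeasurable _ _
  have hPT : ∀ r, P (T r) = (M : ℝ≥0∞)⁻¹ := fun r => by
    rw [hT]; rw [measure_toMeasurable]; exact hunif r
  -- each T r \ A r is null
  have hnull : ∀ r, P (T r \ A r) = 0 := by
    intro r
    set U : Set Ω := ⋃ r' ∈ Finset.univ.erase r, T r' with hU
    have hUmeas : MeasurableSet U :=
      (Finset.univ.erase r).measurableSet_biUnion (fun r' _ => hTmeas r')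
    have hcoverTU : T r ∪ U = Set.univ := by
      ext ω
      simp only [Set.mem_union, Set.mem_univ, iff_true]
      by_cases h : Φ ω s = r
      · exact Or.inl (hAT r h)
      · refine Or.inr (Set.mem_biUnion (Finset.mem_erase.2 ⟨h, Finset.mem_univ _⟩)
          (hAT (Φ ω s) rfl))
    have hPU : P U ≤ (M - 1 : ℕ) * (M : ℝ≥0∞)⁻¹ := by
      refine le_trans (measure_biUnion_finset_le _ _) ?_
      rw [Finset.sum_congr rfl (fun r' _ => hPT r'), Finset.sum_const,
        Finset.card_erase_of_mem (Finset.mem_univ _), Finset.card_univ, Fintype.card_fin,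
        nsmul_eq_mul]
    have key := measure_union_add_inter (μ := P) (T r) hUmeas
    rw [hcoverTU, measure_univ, hPT r] at key
    have hone : (M : ℝ≥0∞)⁻¹ + (M - 1 : ℕ) * (M : ℝ≥0∞)⁻¹ = 1 := by
      calc (M : ℝ≥0∞)⁻¹ + (M - 1 : ℕ) * (M : ℝ≥0∞)⁻¹
          = ((1 : ℝ≥0∞) + (M - 1 : ℕ)) * (M : ℝ≥0∞)⁻¹ := by rw [add_mul, one_mul]
        _ = (M : ℝ≥0∞) * (M : ℝ≥0∞)⁻¹ := by
            congr 1
            rw [← Nat.cast_one, ← Nat.cast_add]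
            congr 1
            omega
        _ = 1 := ENNReal.mul_inv_cancel hMne (ENNReal.natCast_ne_top M)
    have hle : 1 + P (T r ∩ U) ≤ 1 := by
      calc 1 + P (T r ∩ U) = (M : ℝ≥0∞)⁻¹ + P U := key
        _ ≤ (M : ℝ≥0∞)⁻¹ + (M - 1 : ℕ) * (M : ℝ≥0∞)⁻¹ := add_le_add_right hPU _
        _ = 1 := hone
    have hPzero : P (T r ∩ U) = 0 := by
      by_contra h
      have : (1 : ℝ≥0∞) < 1 + P (T r ∩ U) :=
        ENNReal.lt_add_right ENNReal.one_ne_top h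
      exact absurd (lt_of_lt_of_le this hle) (lt_irrefl _)
    refine measure_mono_null ?_ hPzero
    intro ω hω
    refine ⟨hω.1, ?_⟩
    have h : Φ ω s ≠ r := hω.2
    exact Set.mem_biUnion (Finset.mem_erase.2 ⟨h, Finset.mem_univ _⟩) (hAT (Φ ω s) rfl)
  -- pointwise identity with indicators of A
  have hg : ∀ ω, (M : ℝ) * overlapMass p₀ M y ((Φ ω s : Fin M) : ℕ)
      = ∑ r : Fin M, (A r).indicator (fun _ => f r) ω := by
    intro ω
    rw [Finset.sum_eq_single (Φ ω s)]
    · rw [Set.indicator_of_mem (show ω ∈ A (Φ ω s) from rfl)]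
    · intro b _ hb
      exact Set.indicator_of_notMem (fun h => hb (Eq.symm h)) _
    · simp
  -- a.e. equality with indicators of T
  have hN : P (⋃ r, T r \ A r) = 0 := measure_iUnion_null hnull
  have hae : ∀ᵐ ω ∂P, ω ∉ ⋃ r, T r \ A r := measure_eq_zero_iff_ae_notMem.mp hN
  have haeeq : (fun ω => (M : ℝ) * overlapMass p₀ M y ((Φ ω s : Fin M) : ℕ))
      =ᵐ[P] fun ω => ∑ r : Fin M, (T r).indicator (fun _ => f r) ω := by
    filter_upwards [hae] with ω hω
    rw [hg ω]
    refine Finset.sum_congr rfl (fun r _ => ?_)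
    by_cases h : ω ∈ A r
    · rw [Set.indicator_of_mem h, Set.indicator_of_mem (hAT r h)]
    · rw [Set.indicator_of_notMem h, Set.indicator_of_notMem
        (fun hT' => hω (Set.mem_iUnion.2 ⟨r, hT', h⟩))]
  rw [integral_congr_ae haeeq,
    integral_finset_sum _ (fun r _ => (integrable_const (f r)).indicator (hTmeas r))]
  have : ∀ r : Fin M, ∫ ω, (T r).indicator (fun _ => f r) ω ∂P = (M : ℝ)⁻¹ * f r := by
    intro r
    rw [integral_indicator_const (f r) (hTmeas r), measureReal_def, hPT r, smul_eq_mul]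
    congr 1
    rw [ENNReal.toReal_inv]
    simp
  rw [Finset.sum_congr rfl (fun r _ => this r)]
  have hMne' : (M : ℝ) ≠ 0 := by exact_mod_cast Nat.one_le_iff_ne_zero.mp hM
  calc ∑ r : Fin M, (M : ℝ)⁻¹ * f r = ∑ r : Fin M, overlapMass p₀ M y (r : ℕ) := by
        refine Finset.sum_congr rfl (fun r _ => ?_)
        rw [hf]; field_simp
    _ = p₀ y := sum_overlap p₀ hnn hsum M hM y
end

section
/- Information cap from signal dilution: for a token y with p₀(y) > 0, let q(r) = μ(y,r)/p₀(y) be the bin posterior and let H(q) = −∑_{r=0}^{M−1} q(r)·log₂ q(r) be its Shannon entropy (with the convention 0·log₂ 0 = 0). Then the information gain Δ(y) := log₂ M − H(q) satisfies Δ(y) ≤ min{log₂ M, −log₂ p₀(y)}. -/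
open MeasureTheory

lemma bins_union (M : ℕ) (hM : 1 ≤ M) :
    ⋃ r ∈ Finset.range M, quantileBin M r = Set.Ico (0:ℝ) 1 := by
  have hMpos : (0:ℝ) < M := by exact_mod_cast hM
  ext x
  simp only [Set.mem_iUnion, Finset.mem_range, quantileBin, Set.mem_Ico]
  constructor
  · rintro ⟨r, hr, h1, h2⟩
    refine ⟨le_trans (by positivity) h1, lt_of_lt_of_le h2 ?_⟩
    rw [div_le_one hMpos]
    exact_mod_cast Nat.succ_le_of_lt hr
  · rintro ⟨h0, h1⟩
    have hnn : (0:ℤ) ≤ ⌊x * M⌋ := Int.floor_nonneg.2 (by positivity)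
    have hcast : ((⌊x * M⌋.toNat : ℝ)) = (⌊x * M⌋ : ℝ) := by
      exact_mod_cast Int.toNat_of_nonneg hnn
    have hfl : (⌊x * M⌋ : ℝ) ≤ x * M := Int.floor_le _
    have hfu : x * M < (⌊x * M⌋ : ℝ) + 1 := Int.lt_floor_add_one _
    refine ⟨⌊x * M⌋.toNat, ?_, ?_, ?_⟩
    · have hlt : (⌊x * M⌋ : ℝ) < M := lt_of_le_of_lt hfl (by nlinarith)
      have : ⌊x * M⌋ < (M : ℤ) := by exact_mod_cast hlt
      omega
    · rw [hcast, div_le_iff₀ hMpos]; linarith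
    · rw [hcast, lt_div_iff₀ hMpos]; linarith

lemma overlap_sum {V : Type*} [Fintype V] [LinearOrder V]
    (p₀ : V → ℝ) (hnn : ∀ y, 0 ≤ p₀ y) (hsum : ∑ y, p₀ y = 1)
    (M : ℕ) (hM : 1 ≤ M) (y : V) :
    ∑ r ∈ Finset.range M, overlapMass p₀ M y r = p₀ y := by
  have hF0 : 0 ≤ cdfBefore p₀ y := Finset.sum_nonneg fun z _ => hnn z
  have hF1 : cdfBefore p₀ y + p₀ y ≤ 1 := by
    have : cdfBefore p₀ y + p₀ y = ∑ z ∈ Finset.univ.filter (fun z => z ≤ y), p₀ z := by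
      rw [cdfBefore]
      rw [show (Finset.univ.filter (fun z => z ≤ y)) =
        insert y (Finset.univ.filter (fun z => z < y)) by
          ext z; simp [Finset.mem_insert, le_iff_lt_or_eq, or_comm]]
      rw [Finset.sum_insert (by simp)]
      ring
    rw [this, ← hsum]
    exact Finset.sum_le_sum_of_subset_of_nonneg (Finset.filter_subset _ _)
      (fun z _ _ => hnn z)
  have hsub : tokenInterval p₀ y ⊆ Set.Ico (0:ℝ) 1 :=
    Set.Ico_subset_Ico hF0 hF1
  have hdisj : (↑(Finset.range M) : Set ℕ).PairwiseDisjoint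
      (fun r => tokenInterval p₀ y ∩ quantileBin M r) := by
    intro a _ b _ hab
    have hMpos : (0:ℝ) < M := by exact_mod_cast hM
    apply Set.disjoint_of_subset Set.inter_subset_right Set.inter_subset_right
    rcases lt_or_gt_of_ne hab with h | h
    · rw [quantileBin, quantileBin, Set.Ico_disjoint_Ico]
      rw [min_le_iff]; left
      rw [le_max_iff]; right
      apply div_le_div_of_nonneg_right ?_ hMpos.le |>.trans_eq rfl
      exact_mod_cast Nat.succ_le_of_lt h
    · rw [quantileBin, quantileBin, Set.Ico_disjoint_Ico]
      rw [min_le_iff]; right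
      rw [le_max_iff]; left
      apply div_le_div_of_nonneg_right ?_ hMpos.le |>.trans_eq rfl
      exact_mod_cast Nat.succ_le_of_lt h
  have hmeas : ∀ r ∈ Finset.range M,
      MeasurableSet (tokenInterval p₀ y ∩ quantileBin M r) :=
    fun r _ => (measurableSet_Ico).inter measurableSet_Ico
  have hunion : (⋃ r ∈ Finset.range M, tokenInterval p₀ y ∩ quantileBin M r)
      = tokenInterval p₀ y := by
    rw [← Set.inter_iUnion₂]
    rw [show (⋃ r ∈ Finset.range M, quantileBin M r) = ⋃ r ∈ (Finset.range M : Finset ℕ), quantileBin M r from rfl]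
    rw [bins_union M hM]
    exact Set.inter_eq_left.2 hsub
  have hvol : ∑ r ∈ Finset.range M, volume (tokenInterval p₀ y ∩ quantileBin M r)
      = volume (tokenInterval p₀ y) := by
    rw [← measure_biUnion_finset hdisj hmeas, hunion]
  have hvolI : volume (tokenInterval p₀ y) = ENNReal.ofReal (p₀ y) := by
    rw [tokenInterval, Real.volume_Ico]; ring_nf
  have hfin : ∀ r ∈ Finset.range M,
      volume (tokenInterval p₀ y ∩ quantileBin M r) ≠ ⊤ := by
    intro r _
    refine ne_top_of_le_ne_top ?_ (measure_mono Set.inter_subset_left)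
    rw [hvolI]; exact ENNReal.ofReal_ne_top
  calc ∑ r ∈ Finset.range M, overlapMass p₀ M y r
      = (∑ r ∈ Finset.range M, volume (tokenInterval p₀ y ∩ quantileBin M r)).toReal := by
        rw [ENNReal.toReal_sum hfin]; rfl
    _ = p₀ y := by rw [hvol, hvolI, ENNReal.toReal_ofReal (hnn y)]

lemma overlap_nonneg {V : Type*} [Fintype V] [LinearOrder V] (p₀ : V → ℝ) (M : ℕ)
    (y : V) (r : ℕ) : 0 ≤ overlapMass p₀ M y r := ENNReal.toReal_nonneg

lemma overlap_le_p {V : Type*} [Fintype V] [LinearOrder V] (p₀ : V → ℝ)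
    (hnn : ∀ y, 0 ≤ p₀ y) (M : ℕ) (y : V) (r : ℕ) :
    overlapMass p₀ M y r ≤ p₀ y := by
  have hvolI : volume (tokenInterval p₀ y) = ENNReal.ofReal (p₀ y) := by
    rw [tokenInterval, Real.volume_Ico]; ring_nf
  have h := measure_mono (μ := volume) (Set.inter_subset_left
    (s := tokenInterval p₀ y) (t := quantileBin M r))
  rw [hvolI] at h
  calc overlapMass p₀ M y r ≤ (ENNReal.ofReal (p₀ y)).toReal :=
        ENNReal.toReal_mono ENNReal.ofReal_ne_top h
    _ = p₀ y := ENNReal.toReal_ofReal (hnn y)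

lemma overlap_le_bin {V : Type*} [Fintype V] [LinearOrder V] (p₀ : V → ℝ) (M : ℕ)
    (hM : 1 ≤ M) (y : V) (r : ℕ) :
    overlapMass p₀ M y r ≤ 1 / M := by
  have hMpos : (0:ℝ) < M := by exact_mod_cast hM
  have hvolB : volume (quantileBin M r) = ENNReal.ofReal (1 / M) := by
    rw [quantileBin, Real.volume_Ico]
    congr 1
    field_simp
    ring
  have h := measure_mono (μ := volume) (Set.inter_subset_right
    (s := tokenInterval p₀ y) (t := quantileBin M r))
  rw [hvolB] at h
  calc overlapMass p₀ M y r ≤ (ENNReal.ofReal (1 / M)).toReal :=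
        ENNReal.toReal_mono ENNReal.ofReal_ne_top h
    _ = 1 / M := ENNReal.toReal_ofReal (by positivity)

/-- information cap from signal dilution: for a token `y` with `p₀ y > 0`,
let `q(r) = μ(y, r)/p₀(y)` be the bin posterior and
`H(q) = −∑_{r<M} q(r) · log₂ q(r)` its Shannon entropy (with `0 · log₂ 0 = 0`, which is
automatic since `Real.logb 2 0 = 0`). Then the information gain
`Δ(y) = log₂ M − H(q)` satisfies `Δ(y) ≤ min {log₂ M, −log₂ p₀(y)}`. -/
theorem information_cap {V : Type*} [Fintype V] [LinearOrder V]
    (p₀ : V → ℝ) (hnn : ∀ y, 0 ≤ p₀ y) (hsum : ∑ y, p₀ y = 1)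
    (M : ℕ) (hM : 1 ≤ M)
    (y : V) (hy : 0 < p₀ y) :
    Real.logb 2 M -
        (-∑ r ∈ Finset.range M,
            (overlapMass p₀ M y r / p₀ y) * Real.logb 2 (overlapMass p₀ M y r / p₀ y)) ≤
      min (Real.logb 2 M) (-Real.logb 2 (p₀ y)) := by
  have hMpos : (0:ℝ) < M := by exact_mod_cast hM
  set q : ℕ → ℝ := fun r => overlapMass p₀ M y r / p₀ y with hq
  have hq0 : ∀ r, 0 ≤ q r := fun r => div_nonneg (overlap_nonneg p₀ M y r) hy.le
  have hq1 : ∀ r, q r ≤ 1 := fun r => by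
    rw [hq]; exact div_le_one_of_le₀ (overlap_le_p p₀ hnn M y r) hy.le
  have hqsum : ∑ r ∈ Finset.range M, q r = 1 := by
    rw [hq, ← Finset.sum_div, overlap_sum p₀ hnn hsum M hM y, div_self hy.ne']
  have hqbin : ∀ r, q r ≤ 1 / (M * p₀ y) := fun r => by
    rw [hq, div_le_div_iff₀ hy (by positivity)]
    calc overlapMass p₀ M y r * (M * p₀ y) ≤ (1 / M) * (M * p₀ y) := by
          apply mul_le_mul_of_nonneg_right (overlap_le_bin p₀ M hM y r) (by positivity)
      _ = 1 * p₀ y := by field_simp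
  refine le_min ?_ ?_
  · -- H ≥ 0
    have : ∑ r ∈ Finset.range M, q r * Real.logb 2 (q r) ≤ 0 := by
      apply Finset.sum_nonpos
      intro r _
      rcases eq_or_lt_of_le (hq0 r) with h | h
      · simp [← h]
      · exact mul_nonpos_of_nonneg_of_nonpos (hq0 r)
          (Real.logb_nonpos one_lt_two (hq0 r) (hq1 r))
    linarith
  · -- H ≥ logb M + logb p₀
    have key : ∑ r ∈ Finset.range M, q r * Real.logb 2 (q r)
        ≤ Real.logb 2 (1 / (M * p₀ y)) := by
      calc ∑ r ∈ Finset.range M, q r * Real.logb 2 (q r)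
          ≤ ∑ r ∈ Finset.range M, q r * Real.logb 2 (1 / (M * p₀ y)) := by
            apply Finset.sum_le_sum
            intro r _
            rcases eq_or_lt_of_le (hq0 r) with h | h
            · simp [← h]
            · exact mul_le_mul_of_nonneg_left
                (Real.logb_le_logb_of_le one_lt_two h (hqbin r)) (hq0 r)
        _ = Real.logb 2 (1 / (M * p₀ y)) := by
            rw [← Finset.sum_mul, hqsum, one_mul]
    have hlog : Real.logb 2 (1 / (M * p₀ y))
        = -(Real.logb 2 M + Real.logb 2 (p₀ y)) := by
      rw [one_div, Real.logb_inv, Real.logb_mul (by positivity) hy.ne']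
    rw [hlog] at key
    linarith
end
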